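/- For any measurable m : Ω → [0,1] and v ∈ [0,1], the maximizers over segmentations of volume v of Accuracy A_m and of Dice D_m coincide, and both equal the class S_{m,v}. -/

import Mathlib

open MeasureTheory Set

noncomputable section

/-- Normalized Lebesgue measure on the unit cube `[0,1]^n`. -/
def cubeMeasure (n : ℕ) : Measure (Fin n → ℝ) :=
  volume.restrict (Set.univ.pi fun _ => Set.Icc (0:ℝ) 1)

/-- A segmentation: a measurable `{0,1}`-valued function on the cube. -/
def IsSeg {n : ℕ} (s : (Fin n → ℝ) → ℝ) : Prop :=
  Measurable s ∧ ∀ ω, s ω = 0 ∨ s ω = 1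

/-- A marginal function: a measurable `[0,1]`-valued function on the cube. -/
def IsMarg {n : ℕ} (m : (Fin n → ℝ) → ℝ) : Prop :=
  Measurable m ∧ ∀ ω, m ω ∈ Set.Icc (0:ℝ) 1

/-- The volume `‖f‖₁ = ∫ f dλ` (for nonnegative `f`). -/
def vol {n : ℕ} (f : (Fin n → ℝ) → ℝ) : ℝ := ∫ ω, f ω ∂(cubeMeasure n)

/-- `F_m(t) = λ({ω : 1 - m(ω) ≤ t})`. -/
def Fcdf {n : ℕ} (m : (Fin n → ℝ) → ℝ) (t : ℝ) : ℝ :=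
  ((cubeMeasure n) {ω | 1 - m ω ≤ t}).toReal

/-- The left limit `F_m(t-) = λ({ω : 1 - m(ω) < t})`. -/
def FcdfMinus {n : ℕ} (m : (Fin n → ℝ) → ℝ) (t : ℝ) : ℝ :=
  ((cubeMeasure n) {ω | 1 - m ω < t}).toReal

/-- The generalized inverse (quantile function) `F_m⁻¹(v) = inf{t ∈ [0,1] : F_m(t) ≥ v}`. -/
def Finv {n : ℕ} (m : (Fin n → ℝ) → ℝ) (v : ℝ) : ℝ :=
  sInf {t | t ∈ Set.Icc (0:ℝ) 1 ∧ v ≤ Fcdf m t}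

/-- Accuracy. -/
def Accu {n : ℕ} (m s : (Fin n → ℝ) → ℝ) : ℝ :=
  ∫ ω, (s ω * m ω + (1 - s ω) * (1 - m ω)) ∂(cubeMeasure n)

/-- Dice. -/
def Dice {n : ℕ} (m s : (Fin n → ℝ) → ℝ) : ℝ :=
  2 * (∫ ω, s ω * m ω ∂(cubeMeasure n)) / (vol s + vol m)

/-- The class `S_{m,v}`. -/
def Smv {n : ℕ} (m : (Fin n → ℝ) → ℝ) (v : ℝ) (s : (Fin n → ℝ) → ℝ) : Prop :=
  IsSeg s ∧ vol s = v ∧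
    (∫ ω in {ω | m ω < 1 - Finv m v}, s ω ∂(cubeMeasure n)) = 0 ∧
    (∫ ω in {ω | m ω > 1 - Finv m v}, (1 - s ω) ∂(cubeMeasure n)) = 0


instance cubeProb (n : ℕ) : IsProbabilityMeasure (cubeMeasure n) := by
  constructor
  rw [cubeMeasure, Measure.restrict_apply MeasurableSet.univ, Set.univ_inter, volume_pi_pi]
  simp [Real.volume_Icc]

lemma integrable_of_bdd {n : ℕ} {f : (Fin n → ℝ) → ℝ} (hf : Measurable f) {C : ℝ}
    (hb : ∀ ω, |f ω| ≤ C) : Integrable f (cubeMeasure n) :=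
  ⟨hf.aestronglyMeasurable, HasFiniteIntegral.of_bounded (C := C) (ae_of_all _ hb)⟩

lemma seg_mem {n : ℕ} {s : (Fin n → ℝ) → ℝ} (hs : IsSeg s) (ω : Fin n → ℝ) :
    s ω ∈ Set.Icc (0:ℝ) 1 := by
  rcases hs.2 ω with h | h <;> simp [h]

lemma seg_abs {n : ℕ} {s : (Fin n → ℝ) → ℝ} (hs : IsSeg s) (ω : Fin n → ℝ) : |s ω| ≤ 1 := by
  rcases hs.2 ω with h | h <;> simp [h]

lemma marg_abs {n : ℕ} {m : (Fin n → ℝ) → ℝ} (hm : IsMarg m) (ω : Fin n → ℝ) : |m ω| ≤ 1 := by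
  rcases hm.2 ω with ⟨h1, h2⟩
  rw [abs_le]; constructor <;> linarith

lemma integrable_seg {n : ℕ} {s : (Fin n → ℝ) → ℝ} (hs : IsSeg s) :
    Integrable s (cubeMeasure n) := integrable_of_bdd hs.1 (seg_abs hs)

lemma integrable_marg {n : ℕ} {m : (Fin n → ℝ) → ℝ} (hm : IsMarg m) :
    Integrable m (cubeMeasure n) := integrable_of_bdd hm.1 (marg_abs hm)

lemma integrable_segmul {n : ℕ} {s m : (Fin n → ℝ) → ℝ} (hs : IsSeg s) (hm : IsMarg m) :
    Integrable (fun ω => s ω * m ω) (cubeMeasure n) := by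
  refine integrable_of_bdd (hs.1.mul hm.1) (C := 1) fun ω => ?_
  rw [abs_mul]
  calc |s ω| * |m ω| ≤ 1 * 1 := by
        exact mul_le_mul (seg_abs hs ω) (marg_abs hm ω) (abs_nonneg _) zero_le_one
    _ = 1 := one_mul 1

section FinvFacts
variable {n : ℕ} {m : (Fin n → ℝ) → ℝ} (hm : IsMarg m) {v : ℝ} (hv : v ∈ Set.Icc (0:ℝ) 1)

lemma Fcdf_mono (hm : IsMarg m) {t t' : ℝ} (h : t ≤ t') : Fcdf m t ≤ Fcdf m t' := by
  apply ENNReal.toReal_mono (measure_ne_top _ _)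
  exact measure_mono fun ω hω => le_trans hω h

lemma Fcdf_one (hm : IsMarg m) : Fcdf m (1:ℝ) = 1 := by
  have : {ω | 1 - m ω ≤ (1:ℝ)} = Set.univ := by
    ext ω; simpa using (hm.2 ω).1
  rw [Fcdf, this, measure_univ, ENNReal.toReal_one]

lemma FinvSet_nonempty (hm : IsMarg m) (hv : v ∈ Set.Icc (0:ℝ) 1) :
    (1:ℝ) ∈ {t | t ∈ Set.Icc (0:ℝ) 1 ∧ v ≤ Fcdf m t} := by
  refine ⟨by norm_num, ?_⟩
  rw [Fcdf_one hm]; exact hv.2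

lemma Finv_mem (hm : IsMarg m) (hv : v ∈ Set.Icc (0:ℝ) 1) : Finv m v ∈ Set.Icc (0:ℝ) 1 := by
  constructor
  · exact le_csInf ⟨1, FinvSet_nonempty hm hv⟩ fun t ht => ht.1.1
  · exact csInf_le ⟨0, fun t ht => ht.1.1⟩ (FinvSet_nonempty hm hv)

lemma Fcdf_ge_of_gt_Finv (hm : IsMarg m) (hv : v ∈ Set.Icc (0:ℝ) 1) {t : ℝ}
    (ht : Finv m v < t) : v ≤ Fcdf m t := by
  obtain ⟨t', ht', htt'⟩ := exists_lt_of_csInf_lt ⟨1, FinvSet_nonempty hm hv⟩ ht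
  exact le_trans ht'.2 (Fcdf_mono hm htt'.le)

lemma Fcdf_le_of_lt_Finv (hm : IsMarg m) (hv : v ∈ Set.Icc (0:ℝ) 1) {t : ℝ}
    (ht : t < Finv m v) : Fcdf m t ≤ v := by
  by_cases h0 : t < 0
  · have : {ω | 1 - m ω ≤ t} = ∅ := by
      ext ω; simp only [Set.mem_setOf_eq, Set.mem_empty_iff_false, iff_false, not_le]
      have := (hm.2 ω).2; linarith
    rw [Fcdf, this, measure_empty]; simpa using hv.1
  · push_neg at h0
    by_contra hc
    push_neg at hc
    have ht1 : t ≤ 1 := ht.le.trans (Finv_mem hm hv).2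
    have : t ∈ {t | t ∈ Set.Icc (0:ℝ) 1 ∧ v ≤ Fcdf m t} := ⟨⟨h0, ht1⟩, hc.le⟩
    exact absurd (csInf_le ⟨0, fun t ht => ht.1.1⟩ this) (not_le.mpr ht)

/-- `μ {m ≥ τ} ≥ v` where `τ = 1 - Finv m v`. -/
lemma measure_ge_tau (hm : IsMarg m) (hv : v ∈ Set.Icc (0:ℝ) 1) :
    ENNReal.ofReal v ≤ (cubeMeasure n) {ω | 1 - Finv m v ≤ m ω} := by
  have hset : {ω | 1 - Finv m v ≤ m ω} = ⋂ k : ℕ, {ω | 1 - m ω ≤ Finv m v + 1/(k+1)} := by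
    ext ω
    simp only [Set.mem_setOf_eq, Set.mem_iInter]
    constructor
    · intro h k
      have : (0:ℝ) < 1/(k+1) := by positivity
      linarith
    · intro h
      have : 1 - m ω ≤ Finv m v := by
        refine le_of_forall_pos_le_add fun ε hε => ?_
        obtain ⟨k, hk⟩ := exists_nat_one_div_lt hε
        calc 1 - m ω ≤ Finv m v + 1/(k+1) := h k
          _ ≤ Finv m v + ε := by push_cast; linarith [hk]
      linarith
  rw [hset]
  have hmeas : ∀ k : ℕ, NullMeasurableSet {ω | 1 - m ω ≤ Finv m v + 1/(k+1)} (cubeMeasure n) :=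
    fun k => ((measurableSet_le (measurable_const.sub hm.1) measurable_const)).nullMeasurableSet
  have hanti : Antitone (fun k : ℕ => {ω | 1 - m ω ≤ Finv m v + 1/(k+1)}) := by
    intro k l hkl ω hω
    simp only [Set.mem_setOf_eq] at *
    have : (1:ℝ)/(l+1) ≤ 1/(k+1) := by
      apply one_div_le_one_div_of_le (by positivity)
      push_cast; linarith [(Nat.cast_le (α := ℝ)).mpr hkl]
    linarith
  rw [hanti.directed_ge.measure_iInter hmeas ⟨0, measure_ne_top _ _⟩]
  refine le_iInf fun k => ?_
  have : v ≤ Fcdf m (Finv m v + 1/(k+1)) :=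
    Fcdf_ge_of_gt_Finv hm hv (by
      have : (0:ℝ) < 1/(k+1) := by positivity
      linarith)
  exact ENNReal.ofReal_le_of_le_toReal this

/-- `μ {m > τ} ≤ v` where `τ = 1 - Finv m v`. -/
lemma measure_gt_tau (hm : IsMarg m) (hv : v ∈ Set.Icc (0:ℝ) 1) :
    (cubeMeasure n) {ω | 1 - Finv m v < m ω} ≤ ENNReal.ofReal v := by
  have hset : {ω | 1 - Finv m v < m ω} = ⋃ k : ℕ, {ω | 1 - m ω ≤ Finv m v - 1/(k+1)} := by
    ext ω
    simp only [Set.mem_setOf_eq, Set.mem_iUnion]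
    constructor
    · intro h
      obtain ⟨k, hk⟩ := exists_nat_one_div_lt (sub_pos.mpr (by linarith : 1 - m ω < Finv m v))
      exact ⟨k, by push_cast at hk ⊢; linarith⟩
    · intro ⟨k, hk⟩
      have : (0:ℝ) < 1/(k+1) := by positivity
      linarith
  rw [hset]
  have hmono : Monotone (fun k : ℕ => {ω | 1 - m ω ≤ Finv m v - 1/(k+1)}) := by
    intro k l hkl ω hω
    simp only [Set.mem_setOf_eq] at *
    have : (1:ℝ)/(l+1) ≤ 1/(k+1) := by
      apply one_div_le_one_div_of_le (by positivity)
      push_cast; linarith [(Nat.cast_le (α := ℝ)).mpr hkl]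
    linarith
  rw [hmono.directed_le.measure_iUnion]
  refine iSup_le fun k => ?_
  have hk1 : (0:ℝ) < 1/(k+1) := by positivity
  have hle : Fcdf m (Finv m v - 1/(k+1)) ≤ v := Fcdf_le_of_lt_Finv hm hv (by linarith)
  rw [show ((cubeMeasure n) {ω | 1 - m ω ≤ Finv m v - 1/(k+1)}) =
      ENNReal.ofReal (Fcdf m (Finv m v - 1/(k+1))) from
    (ENNReal.ofReal_toReal (measure_ne_top _ _)).symm]
  exact ENNReal.ofReal_le_ofReal hle
end FinvFacts

section Core
variable {n : ℕ} {m s : (Fin n → ℝ) → ℝ} {v : ℝ}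

lemma meas_lt (hm : IsMarg m) (τ : ℝ) : MeasurableSet {ω : Fin n → ℝ | m ω < τ} :=
  measurableSet_lt hm.1 measurable_const

lemma meas_gt (hm : IsMarg m) (τ : ℝ) : MeasurableSet {ω : Fin n → ℝ | τ < m ω} :=
  measurableSet_lt measurable_const hm.1

/-- The condition `∫_{m<τ} s = 0` is equivalent to `s = 0` a.e. there. -/
lemma cond1_iff (hm : IsMarg m) (hs : IsSeg s) (τ : ℝ) :
    (∫ ω in {ω | m ω < τ}, s ω ∂(cubeMeasure n)) = 0 ↔
      ∀ᵐ ω ∂(cubeMeasure n), m ω < τ → s ω = 0 := by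
  have hint : Integrable s ((cubeMeasure n).restrict {ω | m ω < τ}) :=
    (integrable_seg hs).restrict
  rw [MeasureTheory.integral_eq_zero_iff_of_nonneg (fun ω => (seg_mem hs ω).1) hint]
  exact (ae_restrict_iff' (meas_lt hm τ) (p := fun ω => s ω = 0))

lemma cond2_iff (hm : IsMarg m) (hs : IsSeg s) (τ : ℝ) :
    (∫ ω in {ω | m ω > τ}, (1 - s ω) ∂(cubeMeasure n)) = 0 ↔
      ∀ᵐ ω ∂(cubeMeasure n), τ < m ω → s ω = 1 := by
  have hint : Integrable (fun ω => 1 - s ω) ((cubeMeasure n).restrict {ω | τ < m ω}) :=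
    ((integrable_const 1).sub (integrable_seg hs)).restrict
  rw [MeasureTheory.integral_eq_zero_iff_of_nonneg
    (fun ω => by have := (seg_mem hs ω).2; simpa using this) hint]
  constructor
  · intro h
    have h' : ∀ᵐ ω ∂(cubeMeasure n).restrict {ω | τ < m ω}, s ω = 1 := by
      filter_upwards [h] with ω hω
      simp only [Pi.zero_apply] at hω; linarith
    exact (ae_restrict_iff' (meas_gt hm τ) (p := fun ω => s ω = 1)).mp h'
  · intro h
    have h' := (ae_restrict_iff' (meas_gt hm τ) (p := fun ω => s ω = 1)).mpr h
    filter_upwards [h'] with ω hω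
    simp [hω]

lemma integrable_prod (hs : IsSeg s) (hs' : IsSeg s) : True := trivial

/-- Key integrand is integrable. -/
lemma integrable_key (hm : IsMarg m) (hs : IsSeg s) {s' : (Fin n → ℝ) → ℝ} (hs' : IsSeg s')
    {τ : ℝ} (hτ : τ ∈ Set.Icc (0:ℝ) 1) :
    Integrable (fun ω => (s ω - s' ω) * (m ω - τ)) (cubeMeasure n) := by
  refine integrable_of_bdd ((hs.1.sub hs'.1).mul (hm.1.sub measurable_const)) (C := 1) fun ω => ?_
  rw [abs_mul]
  have h1 : |s ω - s' ω| ≤ 1 := by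
    have := seg_mem hs ω; have := seg_mem hs' ω
    rw [abs_le]; constructor <;> [linarith [(seg_mem hs ω).1, (seg_mem hs' ω).2];
      linarith [(seg_mem hs ω).2, (seg_mem hs' ω).1]]
  have h2 : |m ω - τ| ≤ 1 := by
    have := hm.2 ω
    rw [abs_le]; constructor <;> [linarith [(hm.2 ω).1, hτ.2]; linarith [(hm.2 ω).2, hτ.1]]
  calc |s ω - s' ω| * |m ω - τ| ≤ 1 * 1 :=
      mul_le_mul h1 h2 (abs_nonneg _) zero_le_one
    _ = 1 := one_mul 1

/-- The key integral identity. -/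
lemma key_identity (hm : IsMarg m) (hs : IsSeg s) {s' : (Fin n → ℝ) → ℝ} (hs' : IsSeg s')
    (τ : ℝ) :
    (∫ ω, (s ω - s' ω) * (m ω - τ) ∂(cubeMeasure n)) =
      (∫ ω, s ω * m ω ∂(cubeMeasure n)) - (∫ ω, s' ω * m ω ∂(cubeMeasure n))
        - τ * (vol s - vol s') := by
  have hI1 : Integrable (fun ω => s ω * m ω - s' ω * m ω) (cubeMeasure n) :=
    (integrable_segmul hs hm).sub (integrable_segmul hs' hm)
  have hI2 : Integrable (fun ω => τ * (s ω - s' ω)) (cubeMeasure n) :=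
    ((integrable_seg hs).sub (integrable_seg hs')).const_mul τ
  have hIs : Integrable (fun ω => s ω - s' ω) (cubeMeasure n) :=
    (integrable_seg hs).sub (integrable_seg hs')
  calc (∫ ω, (s ω - s' ω) * (m ω - τ) ∂(cubeMeasure n))
      = ∫ ω, ((fun ω => s ω * m ω - s' ω * m ω) ω - (fun ω => τ * (s ω - s' ω)) ω)
          ∂(cubeMeasure n) := by
        refine integral_congr_ae (ae_of_all _ fun ω => ?_); simp only; ring
    _ = (∫ ω, (s ω * m ω - s' ω * m ω) ∂(cubeMeasure n))
          - ∫ ω, τ * (s ω - s' ω) ∂(cubeMeasure n) := integral_sub hI1 hI2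
    _ = ((∫ ω, s ω * m ω ∂(cubeMeasure n)) - ∫ ω, s' ω * m ω ∂(cubeMeasure n))
          - τ * ∫ ω, (s ω - s' ω) ∂(cubeMeasure n) := by
        rw [integral_sub (integrable_segmul hs hm) (integrable_segmul hs' hm)]
        simp only [← smul_eq_mul, integral_smul]
    _ = (∫ ω, s ω * m ω ∂(cubeMeasure n)) - (∫ ω, s' ω * m ω ∂(cubeMeasure n))
          - τ * (vol s - vol s') := by
        rw [integral_sub (integrable_seg hs) (integrable_seg hs')]; rfl

end Core

section Opt
variable {n : ℕ} {m : (Fin n → ℝ) → ℝ} {v : ℝ}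

/-- a.e. nonnegativity of the key integrand for `s₀ ∈ Smv`. -/
lemma key_nonneg (hm : IsMarg m) (hv : v ∈ Set.Icc (0:ℝ) 1) {s₀ s' : (Fin n → ℝ) → ℝ}
    (hs₀ : Smv m v s₀) (hs' : IsSeg s') :
    ∀ᵐ ω ∂(cubeMeasure n), 0 ≤ (s₀ ω - s' ω) * (m ω - (1 - Finv m v)) := by
  set τ := 1 - Finv m v with hτ
  have h1 : ∀ᵐ ω ∂(cubeMeasure n), m ω < τ → s₀ ω = 0 :=
    (cond1_iff hm hs₀.1 τ).mp hs₀.2.2.1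
  have h2 : ∀ᵐ ω ∂(cubeMeasure n), τ < m ω → s₀ ω = 1 :=
    (cond2_iff hm hs₀.1 τ).mp hs₀.2.2.2
  filter_upwards [h1, h2] with ω hω1 hω2
  rcases lt_trichotomy (m ω) τ with h | h | h
  · rw [hω1 h]
    have := (seg_mem hs' ω).1
    nlinarith
  · rw [h]; simp
  · rw [hω2 h]
    have := (seg_mem hs' ω).2
    nlinarith

lemma tau_mem (hm : IsMarg m) (hv : v ∈ Set.Icc (0:ℝ) 1) :
    (1 - Finv m v) ∈ Set.Icc (0:ℝ) 1 := by
  have := Finv_mem hm hv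
  exact ⟨by linarith [this.2], by linarith [this.1]⟩

/-- L1: any element of `Smv` dominates all volume-`v` segmentations in `∫ s·m`. -/
lemma smv_dominates (hm : IsMarg m) (hv : v ∈ Set.Icc (0:ℝ) 1) {s₀ s' : (Fin n → ℝ) → ℝ}
    (hs₀ : Smv m v s₀) (hs' : IsSeg s') (hv' : vol s' = v) :
    (∫ ω, s' ω * m ω ∂(cubeMeasure n)) ≤ ∫ ω, s₀ ω * m ω ∂(cubeMeasure n) := by
  set τ := 1 - Finv m v with hτ
  have hkey : 0 ≤ ∫ ω, (s₀ ω - s' ω) * (m ω - τ) ∂(cubeMeasure n) :=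
    integral_nonneg_of_ae (key_nonneg hm hv hs₀ hs')
  rw [key_identity hm hs₀.1 hs' τ, hs₀.2.1, hv'] at hkey
  linarith

/-- L2: equality case forces membership in `Smv`. -/
lemma smv_of_eq (hm : IsMarg m) (hv : v ∈ Set.Icc (0:ℝ) 1) {s₀ s : (Fin n → ℝ) → ℝ}
    (hs₀ : Smv m v s₀) (hs : IsSeg s) (hvs : vol s = v)
    (heq : (∫ ω, s₀ ω * m ω ∂(cubeMeasure n)) = ∫ ω, s ω * m ω ∂(cubeMeasure n)) :
    Smv m v s := by
  set τ := 1 - Finv m v with hτ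
  have hzero : (∫ ω, (s₀ ω - s ω) * (m ω - τ) ∂(cubeMeasure n)) = 0 := by
    rw [key_identity hm hs₀.1 hs τ, hs₀.2.1, hvs, heq]; ring
  have hae : (fun ω => (s₀ ω - s ω) * (m ω - τ)) =ᵐ[cubeMeasure n] 0 := by
    have := (MeasureTheory.integral_eq_zero_iff_of_nonneg_ae (key_nonneg hm hv hs₀ hs)
      (integrable_key hm hs₀.1 hs (tau_mem hm hv))).mp hzero
    exact this
  have h1 : ∀ᵐ ω ∂(cubeMeasure n), m ω < τ → s₀ ω = 0 :=
    (cond1_iff hm hs₀.1 τ).mp hs₀.2.2.1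
  have h2 : ∀ᵐ ω ∂(cubeMeasure n), τ < m ω → s₀ ω = 1 :=
    (cond2_iff hm hs₀.1 τ).mp hs₀.2.2.2
  refine ⟨hs, hvs, ?_, ?_⟩
  · rw [cond1_iff hm hs τ]
    filter_upwards [hae, h1] with ω hω h1ω
    intro hlt
    rw [h1ω hlt] at hω
    simp only [Pi.zero_apply] at hω
    rcases hs.2 ω with h | h
    · exact h
    · exfalso
      rw [h] at hω
      have : m ω - τ = 0 := by
        rcases mul_eq_zero.mp hω with hc | hc
        · norm_num at hc
        · exact hc
      linarith
  · rw [cond2_iff hm hs τ]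
    filter_upwards [hae, h2] with ω hω h2ω
    intro hgt
    rw [h2ω hgt] at hω
    simp only [Pi.zero_apply] at hω
    rcases hs.2 ω with h | h
    · exfalso
      rw [h] at hω
      have : m ω - τ = 0 := by
        rcases mul_eq_zero.mp hω with hc | hc
        · norm_num at hc
        · exact hc
      linarith
    · exact h

end Opt

section Exist
variable {n : ℕ}

/-- The cube measure of the slab `{ω | ω i > 1}` is zero. -/
lemma cube_slab_above (hn : 0 < n) :
    (cubeMeasure n) {ω : Fin n → ℝ | 1 < ω ⟨0, hn⟩} = 0 := by
  rw [cubeMeasure, Measure.restrict_apply' (MeasurableSet.univ_pi fun _ => measurableSet_Icc)]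
  have : {ω : Fin n → ℝ | 1 < ω ⟨0, hn⟩} ∩ (Set.univ.pi fun _ => Set.Icc (0:ℝ) 1) = ∅ := by
    ext ω
    simp only [Set.mem_inter_iff, Set.mem_setOf_eq, Set.mem_pi, Set.mem_univ, forall_true_left,
      Set.mem_empty_iff_false, iff_false, not_and]
    intro h hall
    have := (hall ⟨0, hn⟩).2
    linarith
  rw [this, measure_empty]

lemma cube_slab_le (hn : 0 < n) {a b : ℝ} (hab : a ≤ b) :
    (cubeMeasure n) {ω : Fin n → ℝ | a < ω ⟨0, hn⟩ ∧ ω ⟨0, hn⟩ ≤ b} ≤ ENNReal.ofReal (b - a) := by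
  rw [cubeMeasure, Measure.restrict_apply' (MeasurableSet.univ_pi fun _ => measurableSet_Icc)]
  have hsub : {ω : Fin n → ℝ | a < ω ⟨0, hn⟩ ∧ ω ⟨0, hn⟩ ≤ b} ∩
      (Set.univ.pi fun _ => Set.Icc (0:ℝ) 1) ⊆
      Set.univ.pi fun i => if i = ⟨0, hn⟩ then Set.Ioc a b else Set.Icc (0:ℝ) 1 := by
    intro ω ⟨⟨h1, h2⟩, h3⟩ i _
    by_cases hi : i = ⟨0, hn⟩
    · simp [hi, h1, h2]
    · simpa [hi] using h3 i trivial
  refine (measure_mono hsub).trans ?_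
  rw [volume_pi_pi]
  rw [show (∏ i : Fin n, volume (if i = ⟨0, hn⟩ then Set.Ioc a b else Set.Icc (0:ℝ) 1)) =
      ∏ i : Fin n, (if i = ⟨0, hn⟩ then ENNReal.ofReal (b - a) else 1) from
    Finset.prod_congr rfl fun i _ => by
      by_cases hi : i = ⟨0, hn⟩ <;> simp [hi, Real.volume_Ioc, Real.volume_Icc]]
  rw [Finset.prod_ite_eq' Finset.univ (⟨0, hn⟩ : Fin n) (fun _ => ENNReal.ofReal (b - a))]
  simp

/-- Slab intermediate value: any measurable set contains a measurable subset of any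
smaller measure (for `n ≥ 1`). -/
lemma exists_subset_cube (hn : 0 < n) {A : Set (Fin n → ℝ)} (hA : MeasurableSet A) {r : ℝ}
    (h0 : 0 ≤ r) (h1 : ENNReal.ofReal r ≤ cubeMeasure n A) :
    ∃ E, MeasurableSet E ∧ E ⊆ A ∧ cubeMeasure n E = ENNReal.ofReal r := by
  set μ := cubeMeasure n
  set i0 : Fin n := ⟨0, hn⟩
  set f : ℝ → ℝ := fun t => (μ (A ∩ {ω | ω i0 ≤ t})).toReal with hf
  have hmeas : ∀ t, MeasurableSet (A ∩ {ω : Fin n → ℝ | ω i0 ≤ t}) := fun t =>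
    hA.inter (measurableSet_le (measurable_pi_apply i0) measurable_const)
  have hfmono : Monotone f := by
    intro t t' htt'
    exact ENNReal.toReal_mono (measure_ne_top _ _)
      (measure_mono fun ω ⟨h1, h2⟩ => ⟨h1, h2.trans htt'⟩)
  have hflip : ∀ t t', t ≤ t' → f t' - f t ≤ t' - t := by
    intro t t' htt'
    have hdiff : μ (A ∩ {ω | ω i0 ≤ t'}) ≤ μ (A ∩ {ω | ω i0 ≤ t}) + ENNReal.ofReal (t' - t) := by
      have hsub : A ∩ {ω | ω i0 ≤ t'} ⊆ (A ∩ {ω | ω i0 ≤ t}) ∪ {ω | t < ω i0 ∧ ω i0 ≤ t'} := by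
        intro ω ⟨ha, hb⟩
        by_cases hc : ω i0 ≤ t
        · exact Or.inl ⟨ha, hc⟩
        · exact Or.inr ⟨not_le.mp hc, hb⟩
      refine (measure_mono hsub).trans ?_
      refine (measure_union_le _ _).trans ?_
      exact add_le_add le_rfl (cube_slab_le hn htt')
    have := ENNReal.toReal_mono (by finiteness) hdiff
    rw [ENNReal.toReal_add (measure_ne_top _ _) ENNReal.ofReal_ne_top,
      ENNReal.toReal_ofReal (by linarith)] at this
    simp only [hf] at *
    linarith
  have hcont : Continuous f := by
    have : LipschitzWith 1 f := by
      apply LipschitzWith.of_dist_le_mul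
      intro a b
      rw [Real.dist_eq, Real.dist_eq, NNReal.coe_one, one_mul]
      rcases le_total a b with hab | hab
      · rw [abs_sub_comm (f a) (f b), abs_of_nonneg (by linarith [hfmono hab] : (0:ℝ) ≤ f b - f a)]
        calc f b - f a ≤ b - a := hflip a b hab
          _ ≤ |a - b| := by rw [abs_sub_comm]; exact le_abs_self _
      · rw [abs_of_nonneg (by linarith [hfmono hab] : (0:ℝ) ≤ f a - f b)]
        calc f a - f b ≤ a - b := hflip b a hab
          _ ≤ |a - b| := le_abs_self _
    exact this.continuous
  have hbelow : μ {ω : Fin n → ℝ | ω i0 ≤ -1} = 0 := by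
    rw [show μ = cubeMeasure n from rfl, cubeMeasure,
      Measure.restrict_apply' (MeasurableSet.univ_pi fun _ => measurableSet_Icc)]
    have : {ω : Fin n → ℝ | ω i0 ≤ -1} ∩ (Set.univ.pi fun _ => Set.Icc (0:ℝ) 1) = ∅ := by
      ext ω
      simp only [Set.mem_inter_iff, Set.mem_setOf_eq, Set.mem_pi, Set.mem_univ, forall_true_left,
        Set.mem_empty_iff_false, iff_false, not_and]
      intro h hall
      have := (hall i0).1
      linarith
    rw [this, measure_empty]
  have hfneg : f (-1) = 0 := by
    have : μ (A ∩ {ω : Fin n → ℝ | ω i0 ≤ -1}) = 0 :=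
      measure_mono_null Set.inter_subset_right hbelow
    simp only [hf, this, ENNReal.toReal_zero]
  have hr : r ≤ (μ A).toReal := by
    have := ENNReal.toReal_mono (measure_ne_top _ _) h1
    rwa [ENNReal.toReal_ofReal h0] at this
  have hfone : r ≤ f 1 := by
    have hAsub : μ A ≤ μ (A ∩ {ω : Fin n → ℝ | ω i0 ≤ 1}) := by
      have hsub : A ⊆ (A ∩ {ω : Fin n → ℝ | ω i0 ≤ 1}) ∪ {ω : Fin n → ℝ | 1 < ω i0} := by
        intro ω ha
        by_cases hc : ω i0 ≤ 1
        · exact Or.inl ⟨ha, hc⟩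
        · exact Or.inr (not_le.mp hc)
      calc μ A ≤ μ ((A ∩ {ω | ω i0 ≤ 1}) ∪ {ω : Fin n → ℝ | 1 < ω i0}) := measure_mono hsub
        _ ≤ μ (A ∩ {ω | ω i0 ≤ 1}) + μ {ω : Fin n → ℝ | 1 < ω i0} := measure_union_le _ _
        _ = μ (A ∩ {ω | ω i0 ≤ 1}) := by rw [cube_slab_above hn]; simp
    exact hr.trans (ENNReal.toReal_mono (measure_ne_top _ _) hAsub)
  obtain ⟨t₀, _, ht₀⟩ : ∃ t₀ ∈ Set.Icc (-1:ℝ) 1, f t₀ = r := by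
    have := intermediate_value_Icc (by norm_num : (-1:ℝ) ≤ 1) hcont.continuousOn
    have hrmem : r ∈ Set.Icc (f (-1)) (f 1) := by rw [hfneg]; exact ⟨h0, hfone⟩
    obtain ⟨t₀, ht₀mem, ht₀⟩ := this hrmem
    exact ⟨t₀, ht₀mem, ht₀⟩
  refine ⟨A ∩ {ω | ω i0 ≤ t₀}, hmeas t₀, Set.inter_subset_left, ?_⟩
  rw [← ht₀]
  simp only [hf]
  rw [ENNReal.ofReal_toReal (measure_ne_top _ _)]

end Exist

section ExistSmv
variable {n : ℕ} {m : (Fin n → ℝ) → ℝ} {v : ℝ}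

lemma vol_const_of_n_zero {s : (Fin 0 → ℝ) → ℝ} (hs : IsSeg s) :
    vol s = s (fun i => i.elim0) := by
  set d : Fin 0 → ℝ := fun i => i.elim0
  have hsub : ∀ ω : Fin 0 → ℝ, ω = d := fun ω => funext fun i => i.elim0
  have : vol s = ∫ _ω, s d ∂(cubeMeasure 0) := by
    refine integral_congr_ae (ae_of_all _ fun ω => ?_)
    rw [hsub ω]
  rw [this, integral_const, probReal_univ]
  simp

lemma exists_smv (hm : IsMarg m) (hv : v ∈ Set.Icc (0:ℝ) 1)
    (hex : ∃ s : (Fin n → ℝ) → ℝ, IsSeg s ∧ vol s = v) : ∃ s₀, Smv m v s₀ := by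
  classical
  set τ := 1 - Finv m v with hτ
  set μ := cubeMeasure n
  set G := {ω : Fin n → ℝ | τ < m ω} with hG
  set A := {ω : Fin n → ℝ | m ω = τ} with hA
  have hGmeas : MeasurableSet G := meas_gt hm τ
  have hAmeas : MeasurableSet A := hm.1 (measurableSet_singleton τ)
  have hGA : Disjoint G A := by
    rw [Set.disjoint_left]
    intro ω hωG hωA
    have h1 : τ < m ω := hωG
    have h2 : m ω = τ := hωA
    linarith
  have hGv : μ G ≤ ENNReal.ofReal v := measure_gt_tau hm hv
  have hvGA : ENNReal.ofReal v ≤ μ G + μ A := by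
    have h1 : ENNReal.ofReal v ≤ μ {ω | τ ≤ m ω} := measure_ge_tau hm hv
    have h2 : {ω : Fin n → ℝ | τ ≤ m ω} ⊆ G ∪ A := by
      intro ω hω
      have hω' : τ ≤ m ω := hω
      rcases lt_or_eq_of_le hω' with h | h
      · exact Or.inl h
      · exact Or.inr h.symm
    calc ENNReal.ofReal v ≤ μ (G ∪ A) := h1.trans (measure_mono h2)
      _ ≤ μ G + μ A := measure_union_le _ _
  set a := (μ G).toReal with ha
  set r := v - a with hr
  have hav : a ≤ v := by
    have := ENNReal.toReal_mono ENNReal.ofReal_ne_top hGv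
    rwa [ENNReal.toReal_ofReal hv.1] at this
  have h0r : 0 ≤ r := by simp [hr]; linarith
  have hrA : ENNReal.ofReal r ≤ μ A := by
    have hb : v ≤ a + (μ A).toReal := by
      have := ENNReal.toReal_mono (by finiteness) hvGA
      rwa [ENNReal.toReal_ofReal hv.1, ENNReal.toReal_add (measure_ne_top _ _)
        (measure_ne_top _ _)] at this
    exact ENNReal.ofReal_le_of_le_toReal (by linarith)
  -- obtain the set E
  obtain ⟨E, hEmeas, hEsub, hEvol⟩ :
      ∃ E, MeasurableSet E ∧ E ⊆ A ∧ μ E = ENNReal.ofReal r := by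
    rcases Nat.eq_zero_or_pos n with hn0 | hn
    · -- n = 0 : v is 0 or 1
      have hv01 : v = 0 ∨ v = 1 := by
        obtain ⟨s, hs, hvs⟩ := hex
        subst hn0
        rw [vol_const_of_n_zero hs] at hvs
        rcases hs.2 (fun i => i.elim0) with h | h
        · exact Or.inl (hvs ▸ h.symm ▸ rfl)
        · exact Or.inr (hvs ▸ h.symm ▸ rfl)
      rcases hv01 with hv0 | hv1
      · refine ⟨∅, MeasurableSet.empty, Set.empty_subset _, ?_⟩
        have : r = 0 := le_antisymm (by simp [hr, hv0]; linarith [ENNReal.toReal_nonneg (a := μ G)]) h0r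
        simp [this]
      · refine ⟨A, hAmeas, le_refl _, ?_⟩
        have hub : μ G + μ A ≤ 1 := by
          rw [← measure_union hGA hAmeas]
          exact (measure_mono (Set.subset_univ _)).trans_eq measure_univ
        have hba : (μ A).toReal ≤ 1 - a := by
          have := ENNReal.toReal_mono ENNReal.one_ne_top hub
          rw [ENNReal.toReal_one, ENNReal.toReal_add (measure_ne_top _ _)
            (measure_ne_top _ _)] at this
          rw [ha]
          linarith
        have hrb : r ≤ (μ A).toReal := by
          have := ENNReal.toReal_mono (measure_ne_top _ _) hrA
          rwa [ENNReal.toReal_ofReal h0r] at this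
        have : (μ A).toReal = r := le_antisymm (by rw [hr, hv1]; exact hba) hrb
        rw [← this, ENNReal.ofReal_toReal (measure_ne_top _ _)]
    · exact exists_subset_cube hn hAmeas h0r hrA
  -- build s₀
  have hEG : Disjoint G E := hGA.mono_right hEsub
  set B := G ∪ E with hB
  have hBmeas : MeasurableSet B := hGmeas.union hEmeas
  have hμB : μ B = ENNReal.ofReal v := by
    rw [hB, measure_union hEG hEmeas, hEvol, ha] at *
    rw [← ENNReal.ofReal_toReal (measure_ne_top μ G), ← ENNReal.ofReal_add
      ENNReal.toReal_nonneg h0r]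
    congr 1
    simp [hr]
  set s₀ : (Fin n → ℝ) → ℝ := B.indicator (fun _ => (1:ℝ)) with hs₀
  have hseg : IsSeg s₀ := by
    constructor
    · exact measurable_const.indicator hBmeas
    · intro ω
      by_cases hω : ω ∈ B <;> simp [hs₀, hω]
  have hvol : vol s₀ = v := by
    rw [vol, hs₀, MeasureTheory.integral_indicator_const (1:ℝ) hBmeas, measureReal_def, hμB,
      ENNReal.toReal_ofReal hv.1]
    simp
  refine ⟨s₀, hseg, hvol, ?_, ?_⟩
  · rw [cond1_iff hm hseg τ]
    refine ae_of_all _ fun ω hω => ?_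
    have hωB : ω ∉ B := by
      rintro (h | h)
      · exact absurd hω (not_lt.mpr (le_of_lt h))
      · exact absurd (hEsub h) (ne_of_lt hω)
    simp [hs₀, hωB]
  · rw [cond2_iff hm hseg τ]
    refine ae_of_all _ fun ω hω => ?_
    have hωB : ω ∈ B := Or.inl hω
    simp [hs₀, hωB]

end ExistSmv

section Main
variable {n : ℕ} {m : (Fin n → ℝ) → ℝ} {v : ℝ}

lemma accu_eq (hm : IsMarg m) {s : (Fin n → ℝ) → ℝ} (hs : IsSeg s) :
    Accu m s = (∫ ω, (1 - m ω) ∂(cubeMeasure n)) +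
      2 * (∫ ω, s ω * m ω ∂(cubeMeasure n)) - vol s := by
  have hI1 : Integrable (fun ω => (1:ℝ) - m ω) (cubeMeasure n) :=
    (integrable_const 1).sub (integrable_marg hm)
  have hI2 : Integrable (fun ω => 2 * (s ω * m ω)) (cubeMeasure n) :=
    (integrable_segmul hs hm).const_mul 2
  calc Accu m s
      = ∫ ω, (((fun ω => (1:ℝ) - m ω) ω + (fun ω => 2 * (s ω * m ω)) ω) - s ω)
          ∂(cubeMeasure n) := by
        refine integral_congr_ae (ae_of_all _ fun ω => ?_); simp only; ring
    _ = (∫ ω, ((1:ℝ) - m ω) + 2 * (s ω * m ω) ∂(cubeMeasure n)) - ∫ ω, s ω ∂(cubeMeasure n) :=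
        integral_sub (hI1.add hI2) (integrable_seg hs)
    _ = ((∫ ω, ((1:ℝ) - m ω) ∂(cubeMeasure n)) + ∫ ω, 2 * (s ω * m ω) ∂(cubeMeasure n))
          - vol s := by rw [integral_add hI1 hI2]; rfl
    _ = _ := by
      simp only [← smul_eq_mul, integral_smul]

lemma accu_le_iff (hm : IsMarg m) {s s' : (Fin n → ℝ) → ℝ} (hs : IsSeg s) (hs' : IsSeg s')
    (hvs : vol s = v) (hvs' : vol s' = v) :
    Accu m s' ≤ Accu m s ↔
      (∫ ω, s' ω * m ω ∂(cubeMeasure n)) ≤ ∫ ω, s ω * m ω ∂(cubeMeasure n) := by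
  rw [accu_eq hm hs, accu_eq hm hs', hvs, hvs']
  constructor <;> intro h <;> linarith

lemma dice_le_iff (h0 : 0 < vol m) (hv0 : 0 ≤ v) {s s' : (Fin n → ℝ) → ℝ}
    (hvs : vol s = v) (hvs' : vol s' = v) :
    Dice m s' ≤ Dice m s ↔
      (∫ ω, s' ω * m ω ∂(cubeMeasure n)) ≤ ∫ ω, s ω * m ω ∂(cubeMeasure n) := by
  rw [Dice, Dice, hvs, hvs', div_le_div_iff_of_pos_right (by linarith)]
  constructor <;> intro h <;> linarith

theorem stmt13 {n : ℕ} {m : (Fin n → ℝ) → ℝ} (hm : IsMarg m) (h0 : 0 < vol m)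
    {v : ℝ} (hv : v ∈ Set.Icc (0:ℝ) 1) :
    {s | IsSeg s ∧ vol s = v ∧ ∀ s', IsSeg s' → vol s' = v → Accu m s' ≤ Accu m s} =
      {s | Smv m v s} ∧
    {s | IsSeg s ∧ vol s = v ∧ ∀ s', IsSeg s' → vol s' = v → Dice m s' ≤ Dice m s} =
      {s | Smv m v s} := by
  constructor
  · ext s
    simp only [Set.mem_setOf_eq]
    constructor
    · rintro ⟨hs, hvs, hmax⟩
      obtain ⟨s₀, hs₀⟩ := exists_smv hm hv ⟨s, hs, hvs⟩
      have hd : (∫ ω, s ω * m ω ∂(cubeMeasure n)) ≤ ∫ ω, s₀ ω * m ω ∂(cubeMeasure n) :=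
        smv_dominates hm hv hs₀ hs hvs
      have hd2 := (accu_le_iff hm hs hs₀.1 hvs hs₀.2.1).mp (hmax s₀ hs₀.1 hs₀.2.1)
      exact smv_of_eq hm hv hs₀ hs hvs (le_antisymm hd2 hd)
    · intro hsmv
      refine ⟨hsmv.1, hsmv.2.1, fun s' hs' hv' => ?_⟩
      exact (accu_le_iff hm hsmv.1 hs' hsmv.2.1 hv').mpr (smv_dominates hm hv hsmv hs' hv')
  · ext s
    simp only [Set.mem_setOf_eq]
    constructor
    · rintro ⟨hs, hvs, hmax⟩
      obtain ⟨s₀, hs₀⟩ := exists_smv hm hv ⟨s, hs, hvs⟩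
      have hd : (∫ ω, s ω * m ω ∂(cubeMeasure n)) ≤ ∫ ω, s₀ ω * m ω ∂(cubeMeasure n) :=
        smv_dominates hm hv hs₀ hs hvs
      have hd2 := (dice_le_iff h0 hv.1 hvs hs₀.2.1).mp (hmax s₀ hs₀.1 hs₀.2.1)
      exact smv_of_eq hm hv hs₀ hs hvs (le_antisymm hd2 hd)
    · intro hsmv
      refine ⟨hsmv.1, hsmv.2.1, fun s' hs' hv' => ?_⟩
      exact (dice_le_iff h0 hv.1 hsmv.2.1 hv').mpr (smv_dominates hm hv hsmv hs' hv')


end Main
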